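/- Let c = (c_1,…,c_{2s}) be a composition of n into 2s positive parts (s ≥ 1) and let F̄(c) be the circular fence poset on {1,…,n}. Then for every k with 0 ≤ k ≤ n, the number of lower ideals of F̄(c) of cardinality k equals the number of lower ideals of cardinality n − k; i.e., the rank polynomial of every circular fence poset is symmetric. -/

import Mathlib

/-- The partial sum `σ_k = c_1 + … + c_k` of a composition `c` with `2s` parts. -/
def circSigma (s : ℕ) (c : Fin (2 * s) → ℕ) (k : ℕ) : ℕ :=
  ∑ i ∈ Finset.univ.filter (fun i : Fin (2 * s) => (i : ℕ) < k), c i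

/-- The (0-indexed) position `p` carries an up step `x_{p+1} ≺ x_{p+2}` exactly when the
(1-indexed) block `m` containing `p+1` is odd, i.e. when the number of `m ∈ {1,…,2s}` with
`σ_m ≤ p` is even. -/
def circUpStep (s : ℕ) (c : Fin (2 * s) → ℕ) (p : ℕ) : Prop :=
  (Finset.univ.filter (fun m : Fin (2 * s) => circSigma s c ((m : ℕ) + 1) ≤ p)).card % 2 = 0

instance (s : ℕ) (c : Fin (2 * s) → ℕ) (p : ℕ) : Decidable (circUpStep s c p) := by
  unfold circUpStep; infer_instance

/-- `I` is a lower ideal of the circular fence poset `F̄(c)`: it is closed under all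
generating cover relations (indices taken cyclically). -/
def IsCircFenceIdeal (s n : ℕ) (c : Fin (2 * s) → ℕ) (I : Finset (Fin n)) : Prop :=
  ∀ p q : Fin n, (q : ℕ) = ((p : ℕ) + 1) % n →
    (if circUpStep s c (p : ℕ) then (q ∈ I → p ∈ I) else (p ∈ I → q ∈ I))

/-! ### Auxiliary machinery: transfer matrices over `ℚ[X]` -/

open Polynomial Matrix

instance (s n : ℕ) (c : Fin (2 * s) → ℕ) (I : Finset (Fin n)) :
    Decidable (IsCircFenceIdeal s n c I) := by
  unfold IsCircFenceIdeal; infer_instance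

/-- The transfer matrix of a single (up or down) step. -/
noncomputable def Mq (bw : Bool) : Matrix Bool Bool (Polynomial ℚ) :=
  Matrix.of fun i j => if (if bw then j ≤ i else i ≤ j) then (if j then X else 1) else 0

/-- A symmetric matrix `S` with `Mq b * S = S * (Mq b)ᵀ` for both `b`. -/
noncomputable def Sm : Matrix Bool Bool (Polynomial ℚ) :=
  Matrix.of fun i j =>
    if i then (if j then X - 1 else X) else (if j then X else X - X ^ 2)

/-- The adjugate of `Sm`, written down explicitly. -/
noncomputable def Tm : Matrix Bool Bool (Polynomial ℚ) :=
  Matrix.of fun i j =>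
    if i then (if j then X - X ^ 2 else -X) else (if j then -X else X - 1)

/-- The determinant of `Sm`. -/
noncomputable def dPoly : Polynomial ℚ := X ^ 2 - X ^ 3 - X

lemma dPoly_ne_zero : dPoly ≠ 0 := by
  intro h
  have := congrArg (Polynomial.eval 2) h
  simp [dPoly] at this
  norm_num at this

lemma MqSm (bw : Bool) : Mq bw * Sm = Sm * (Mq bw)ᵀ := by
  apply Matrix.ext; intro i j
  cases bw <;> cases i <;> cases j <;>
    simp [Mq, Sm, Matrix.mul_apply, Fintype.sum_bool, Matrix.transpose_apply,
      show ¬((true : Bool) ≤ false) by decide] <;> ring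

lemma TmSm : Tm * Sm = dPoly • 1 := by
  apply Matrix.ext; intro i j
  cases i <;> cases j <;>
    simp [Tm, Sm, dPoly, Matrix.mul_apply, Fintype.sum_bool, Matrix.smul_apply,
      Matrix.one_apply] <;> ring

lemma SmTm : Sm * Tm = dPoly • 1 := by
  apply Matrix.ext; intro i j
  cases i <;> cases j <;>
    simp [Tm, Sm, dPoly, Matrix.mul_apply, Fintype.sum_bool, Matrix.smul_apply,
      Matrix.one_apply] <;> ring

lemma listRev (L : List Bool) :
    (L.map Mq).prod * Sm = Sm * ((L.reverse.map Mq).prod)ᵀ := by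
  induction L with
  | nil => simp
  | cons b L ih =>
      rw [List.map_cons, List.prod_cons, List.reverse_cons, List.map_append, List.prod_append,
        mul_assoc, ih, ← mul_assoc, MqSm, mul_assoc, ← Matrix.transpose_mul]
      simp

/-- KEY: the trace of a word in the matrices `Mq` is invariant under reversing the word. -/
lemma traceRev (L : List Bool) :
    ((L.map Mq).prod).trace = ((L.reverse.map Mq).prod).trace := by
  have h := congrArg (fun A => A * Tm) (listRev L)
  simp only [mul_assoc, SmTm] at h
  have h2 : ((L.map Mq).prod * (dPoly • 1)) = Sm * (((L.reverse.map Mq).prod)ᵀ * Tm) := h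
  have h3 := congrArg Matrix.trace h2
  rw [Matrix.trace_mul_comm Sm] at h3
  rw [mul_assoc, TmSm] at h3
  have h4 : dPoly * ((L.map Mq).prod).trace = dPoly * (((L.reverse.map Mq).prod)ᵀ).trace := by
    simpa [Matrix.trace_smul, Matrix.mul_smul, smul_eq_mul] using h3
  have := mul_left_cancel₀ dPoly_ne_zero h4
  simpa [Matrix.trace_transpose] using this

/-! ### Path and cycle expansions of matrix products -/

lemma pathLemma (u : ℕ → Bool) :
    ∀ (m : ℕ) (st : ℕ) (i j : Bool),
      (((List.range m).map (fun p => Mq (u (st + p)))).prod) i j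
        = ∑ g : Fin m → Bool,
            (∏ t : Fin m, Mq (u (st + (t : ℕ))) ((Fin.cons i g : Fin (m+1) → Bool) t.castSucc) (g t)) *
              (if (Fin.cons i g : Fin (m+1) → Bool) (Fin.last m) = j then 1 else 0) := by
  intro m
  induction m with
  | zero =>
      intro st i j
      simp [Matrix.one_apply, Fin.last]
  | succ m ih =>
      intro st i j
      rw [List.range_succ_eq_map]
      rw [List.map_cons, List.prod_cons, List.map_map]
      rw [Matrix.mul_apply]
      have hrw : ((List.range m).map ((fun p => Mq (u (st + p))) ∘ Nat.succ))
          = (List.range m).map (fun p => Mq (u ((st + 1) + p))) := by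
        apply List.map_congr_left
        intro p _
        have h : st + Nat.succ p = st + 1 + p := by omega
        simp only [Function.comp_apply, h]
      rw [hrw]
      rw [← (Fin.consEquiv (fun _ => Bool)).sum_comp]
      rw [Fintype.sum_prod_type]
      apply Finset.sum_congr rfl
      intro x _
      rw [ih (st + 1) x j, Finset.mul_sum]
      apply Finset.sum_congr rfl
      intro g' _
      have e1 : ((Fin.consEquiv (fun _ => Bool)) (x, g') : Fin (m+1) → Bool) = Fin.cons x g' := by
        ext t
        simp [Fin.consEquiv]
      rw [e1]
      rw [Fin.prod_univ_succ]
      simp only [Fin.cons_zero, Fin.castSucc_zero, Fin.cons_succ, Fin.succ_last,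
        Fin.val_succ, Fin.val_zero, add_zero]
      have e2 : ∀ t : Fin m, (Fin.cons i (Fin.cons x g') : Fin (m+2) → Bool) (t.succ.castSucc)
          = (Fin.cons x g' : Fin (m+1) → Bool) t.castSucc := by
        intro t
        rw [← Fin.succ_castSucc, Fin.cons_succ]
      have e3 : ∀ t : Fin m, st + ((t : ℕ) + 1) = (st + 1) + (t : ℕ) := by intro t; omega
      have e4 : (Fin.cons i (Fin.cons x g') : Fin (m+2) → Bool) (Fin.last (m+1))
          = (Fin.cons x g' : Fin (m+1) → Bool) (Fin.last m) := by
        rw [← Fin.succ_last, Fin.cons_succ]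
      simp only [e2, e3, e4]
      ring

lemma lastAddOne (N : ℕ) : (Fin.last N) + (1 : Fin (N+1)) = 0 := by
  apply Fin.ext
  simp [Fin.add_def, Fin.val_one', Fin.last]

lemma castSuccAddOne {N : ℕ} (u : Fin N) : u.castSucc + (1 : Fin (N+1)) = u.succ := by
  apply Fin.ext
  have h1 : (1 : ℕ) % (N+1) = 1 := Nat.mod_eq_of_lt (by have := u.isLt; omega)
  simp only [Fin.add_def, Fin.val_one', Fin.val_succ, Fin.coe_castSucc, h1]
  exact Nat.mod_eq_of_lt (by have := u.isLt; omega)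

lemma snoc_succ (N : ℕ) (b : Fin (N+1) → Bool) (t : Fin (N+1)) :
    (Fin.snoc b (b 0) : Fin (N+2) → Bool) t.succ = b (t + 1) := by
  refine Fin.lastCases ?_ ?_ t
  · rw [Fin.succ_last, Fin.snoc_last, lastAddOne]
  · intro v
    rw [Fin.succ_castSucc, Fin.snoc_castSucc, castSuccAddOne]

lemma cycLemma (u : ℕ → Bool) (N : ℕ) :
    (((List.range (N+1)).map (fun p => Mq (u p))).prod).trace
      = ∑ b : Fin (N+1) → Bool, ∏ t : Fin (N+1), Mq (u (t : ℕ)) (b t) (b (t + 1)) := by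
  have hp := pathLemma u (N+1) 0
  simp only [zero_add] at hp
  have h1 : (((List.range (N+1)).map (fun p => Mq (u p))).prod).trace
      = ∑ i : Bool, (((List.range (N+1)).map (fun p => Mq (u p))).prod) i i := by
    simp [Matrix.trace, Matrix.diag]
  rw [h1]
  set target : (Fin (N+2) → Bool) → Polynomial ℚ := fun s =>
    (∏ t : Fin (N+1), Mq (u (t : ℕ)) (s t.castSucc) (s t.succ)) *
      (if s (Fin.last (N+1)) = s 0 then 1 else 0) with htarget
  have h2 : ∑ i : Bool, (((List.range (N+1)).map (fun p => Mq (u p))).prod) i i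
      = ∑ s : Fin (N+2) → Bool, target s := by
    rw [← (Fin.consEquiv (fun _ => Bool)).sum_comp target, Fintype.sum_prod_type]
    apply Finset.sum_congr rfl
    intro i _
    rw [hp i i]
    apply Finset.sum_congr rfl
    intro g _
    have e1 : ((Fin.consEquiv (fun _ => Bool)) (i, g) : Fin (N+2) → Bool) = Fin.cons i g := by
      ext t; simp [Fin.consEquiv]
    rw [htarget]
    simp only [e1, Fin.cons_succ, Fin.cons_zero]
  rw [h2]
  have h3 : ∀ s : Fin (N+2) → Bool, target s
      = if s (Fin.last (N+1)) = s 0 then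
          (∏ t : Fin (N+1), Mq (u (t : ℕ)) (s t.castSucc) (s t.succ)) else 0 := by
    intro s; rw [htarget]; simp only [mul_ite, mul_one, mul_zero]
  simp only [h3]
  rw [← Finset.sum_filter]
  apply Finset.sum_nbij' (i := fun s => fun t : Fin (N+1) => s t.castSucc)
    (j := fun b => (Fin.snoc b (b 0) : Fin (N+2) → Bool))
  · intro s _; exact Finset.mem_univ _
  · intro b _
    simp only [Finset.mem_filter, Finset.mem_univ, true_and]
    rw [Fin.snoc_last]
    rw [show (0 : Fin (N+2)) = (0 : Fin (N+1)).castSucc by simp]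
    rw [Fin.snoc_castSucc]
  · intro s hs
    simp only [Finset.mem_filter, Finset.mem_univ, true_and] at hs
    ext t
    refine Fin.lastCases ?_ ?_ t
    · have h0 : (0 : Fin (N+1)).castSucc = (0 : Fin (N+2)) := by
        apply Fin.ext; simp
      simp only [Fin.snoc_last, h0]
      exact hs.symm
    · intro v; rw [Fin.snoc_castSucc]
  · intro b _
    ext t
    rw [Fin.snoc_castSucc]
  · intro s hs
    simp only [Finset.mem_filter, Finset.mem_univ, true_and] at hs
    have hb : (Fin.snoc (fun t : Fin (N+1) => s t.castSucc)
        ((fun t : Fin (N+1) => s t.castSucc) 0) : Fin (N+2) → Bool) = s := by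
      ext t
      refine Fin.lastCases ?_ ?_ t
      · have h0 : (0 : Fin (N+1)).castSucc = (0 : Fin (N+2)) := by
          apply Fin.ext; simp
        simp only [Fin.snoc_last, h0]
        exact hs.symm
      · intro v; rw [Fin.snoc_castSucc]
    conv_lhs => rw [← hb]
    apply Finset.prod_congr rfl
    intro t _
    rw [Fin.snoc_castSucc, snoc_succ]

/-! ### Evaluating the cyclic products combinatorially -/

/-- Number of `true` values of a boolean vector. -/
def cntB {N : ℕ} (b : Fin N → Bool) : ℕ := (Finset.univ.filter fun t => b t = true).card

lemma bnot_le (x y : Bool) : ((!x) ≤ (!y)) ↔ (y ≤ x) := by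
  cases x <;> cases y <;> simp

lemma cntB_le {N : ℕ} (b : Fin N → Bool) : cntB b ≤ N := by
  have h := Finset.card_filter_le (Finset.univ : Finset (Fin N)) (fun t => b t = true)
  simpa [cntB] using h

lemma cycEval (u : ℕ → Bool) (N : ℕ) (b : Fin (N+1) → Bool) :
    (∏ t : Fin (N+1), Mq (u (t : ℕ)) (b t) (b (t + 1)))
      = if (∀ t : Fin (N+1), if u (t : ℕ) then b (t+1) ≤ b t else b t ≤ b (t+1))
          then X ^ cntB b else 0 := by
  by_cases h : ∀ t : Fin (N+1), if u (t : ℕ) then b (t+1) ≤ b t else b t ≤ b (t+1)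
  · rw [if_pos h]
    have hf : ∀ t : Fin (N+1), Mq (u (t : ℕ)) (b t) (b (t+1))
        = X ^ (if b (t+1) = true then 1 else 0) := by
      intro t
      have ht := h t
      show (if (if u (t : ℕ) then b (t+1) ≤ b t else b t ≤ b (t+1)) then
          (if b (t+1) then X else 1) else 0) = X ^ (if b (t+1) = true then 1 else 0)
      rw [if_pos ht]
      cases b (t+1) <;> simp
    rw [Finset.prod_congr rfl (fun t _ => hf t), Finset.prod_pow_eq_pow_sum]
    congr 1
    have hshift : ∑ t : Fin (N+1), (if b (t+1) = true then 1 else 0)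
        = ∑ t : Fin (N+1), (if b t = true then 1 else 0) :=
      Equiv.sum_comp (Equiv.addRight (1 : Fin (N+1))) (fun t => if b t = true then 1 else 0)
    rw [hshift, cntB, Finset.card_filter]
  · rw [if_neg h]
    push_neg at h
    obtain ⟨t, ht⟩ := h
    apply Finset.prod_eq_zero (Finset.mem_univ t)
    show (if (if u (t : ℕ) then b (t+1) ≤ b t else b t ≤ b (t+1)) then
        (if b (t+1) then X else 1) else 0) = 0
    rw [if_neg ht]

lemma negValNat {N : ℕ} (p : Fin (N+1)) : ((-(p + 1) : Fin (N+1))).val = N - p.val := by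
  rw [Fin.neg_def]
  rw [Fin.val_add_one]
  by_cases hp : p = Fin.last N
  · subst hp
    simp
  · rw [if_neg hp]
    have h1 : p.val < N := by
      have h2 := p.isLt
      by_contra hge
      apply hp
      apply Fin.ext
      simp only [Fin.val_last]
      omega
    show (N + 1 - (p.val + 1)) % (N + 1) = N - p.val
    rw [Nat.mod_eq_of_lt (by omega)]
    omega

/-- The complement-and-reflect bijection on cyclic boolean sequences. -/
lemma flipSum (u : ℕ → Bool) (N : ℕ) :
    (∑ b : Fin (N+1) → Bool,
      if (∀ t : Fin (N+1), if u (N - (t : ℕ)) then b (t+1) ≤ b t else b t ≤ b (t+1))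
        then (X : Polynomial ℚ) ^ cntB b else 0)
    = ∑ a : Fin (N+1) → Bool,
      if (∀ t : Fin (N+1), if u (t : ℕ) then a (t+1) ≤ a t else a t ≤ a (t+1))
        then X ^ (N + 1 - cntB a) else 0 := by
  have hinv : Function.Involutive (fun (a : Fin (N+1) → Bool) => fun t => !(a (-t))) := by
    intro a; funext t; simp
  set e : Equiv.Perm (Fin (N+1) → Bool) := hinv.toPerm _ with he
  rw [← Equiv.sum_comp e (fun b => if (∀ t : Fin (N+1),
      if u (N - (t : ℕ)) then b (t+1) ≤ b t else b t ≤ b (t+1))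
      then (X : Polynomial ℚ) ^ cntB b else 0)]
  apply Finset.sum_congr rfl
  intro a _
  have hea : ∀ x, (e a) x = !(a (-x)) := fun x => rfl
  have hcond : (∀ t : Fin (N+1), if u (N - (t : ℕ)) then (e a) (t+1) ≤ (e a) t
        else (e a) t ≤ (e a) (t+1))
      ↔ (∀ p : Fin (N+1), if u (p : ℕ) then a (p+1) ≤ a p else a p ≤ a (p+1)) := by
    constructor
    · intro h p
      have ht := h (-(p+1))
      have e1 : (-(-(p+1)) : Fin (N+1)) = p + 1 := by abel
      have e2 : (-((-(p+1)) + 1) : Fin (N+1)) = p := by abel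
      rw [hea, hea, e1, e2, negValNat] at ht
      have hval : N - (N - p.val) = p.val := by
        have := p.isLt; omega
      rw [hval] at ht
      by_cases hu : u (p : ℕ)
      · rw [if_pos hu] at ht ⊢
        exact (bnot_le _ _).mp ht
      · rw [if_neg hu] at ht ⊢
        exact (bnot_le _ _).mp ht
    · intro h t
      set p : Fin (N+1) := -(t + 1) with hp
      have hpt : t = -(p + 1) := by rw [hp]; abel
      have ht := h p
      have e1 : (-t : Fin (N+1)) = p + 1 := by rw [hp]; abel
      have e2 : (-(t+1) : Fin (N+1)) = p := hp.symm
      have e3 : N - (t : ℕ) = (p : ℕ) := by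
        rw [hpt, negValNat]
        have := p.isLt; omega
      rw [hea, hea, e1, e2, e3]
      by_cases hu : u (p : ℕ)
      · rw [if_pos hu] at ht ⊢
        exact (bnot_le _ _).mpr ht
      · rw [if_neg hu] at ht ⊢
        exact (bnot_le _ _).mpr ht
  have hcnt : cntB (e a) = N + 1 - cntB a := by
    have h1 : cntB (e a) = (Finset.univ.filter fun t : Fin (N+1) => a (-t) = false).card := by
      rw [cntB]
      congr 1
      apply Finset.filter_congr
      intro t _
      rw [hea]
      simp
    have h2 : (Finset.univ.filter fun t : Fin (N+1) => a (-t) = false).card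
        = (Finset.univ.filter fun t : Fin (N+1) => a t = false).card := by
      apply Finset.card_nbij' (i := fun t => -t) (j := fun t => -t)
      · intro t ht
        simp only [Finset.mem_coe, Finset.mem_filter, Finset.mem_univ, true_and] at ht ⊢
        exact ht
      · intro t ht
        simp only [Finset.mem_coe, Finset.mem_filter, Finset.mem_univ, true_and] at ht ⊢
        simpa using ht
      · intro t _; simp
      · intro t _; simp
    have h3 : cntB a + (Finset.univ.filter fun t : Fin (N+1) => a t = false).card = N + 1 := by
      rw [cntB]
      have := Finset.card_filter_add_card_filter_not
        (s := (Finset.univ : Finset (Fin (N+1)))) (fun t => a t = true)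
      simp only [Bool.not_eq_true] at this
      simpa using this
    rw [h1, h2]
    omega
  rw [if_congr hcond (by rw [hcnt]) rfl]

/-! ### Counting lemmas -/

lemma listRevEq (n : ℕ) (w : ℕ → Bool) :
    ((List.range n).map w).reverse = (List.range n).map (fun p => w (n - 1 - p)) := by
  apply List.ext_getElem
  · simp
  · intro i h1 h2
    simp only [List.length_reverse, List.length_map, List.length_range] at h1 h2
    rw [List.getElem_reverse]
    simp [List.getElem_map, List.getElem_range]

lemma coeffCount (N : ℕ) (P : (Fin (N+1) → Bool) → Prop) [DecidablePred P]
    (e : (Fin (N+1) → Bool) → ℕ) (k : ℕ) :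
    (∑ b : Fin (N+1) → Bool, if P b then (X : Polynomial ℚ) ^ e b else 0).coeff k
      = ((Finset.univ.filter fun b => P b ∧ e b = k).card : ℚ) := by
  rw [Polynomial.finset_sum_coeff]
  have h : ∀ b : Fin (N+1) → Bool, ((if P b then (X : Polynomial ℚ) ^ e b else 0).coeff k)
      = if P b ∧ e b = k then 1 else 0 := by
    intro b
    by_cases hp : P b
    · rw [if_pos hp, Polynomial.coeff_X_pow]
      by_cases h2 : e b = k
      · simp [hp, h2]
      · simp only [hp, true_and, if_neg h2]
        rw [if_neg (by omega)]
    · simp [hp]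
  rw [Finset.sum_congr rfl (fun b _ => h b)]
  rw [Finset.sum_boole]

lemma decide_le_decide (P Q : Prop) [Decidable P] [Decidable Q] :
    ((decide P) ≤ (decide Q)) ↔ (P → Q) := by
  by_cases hP : P <;> by_cases hQ : Q <;> simp [hP, hQ]

/-- the rank polynomial of every circular fence poset is symmetric:
the number of lower ideals of cardinality `k` equals the number of lower ideals of
cardinality `n - k`. -/
theorem circular_fence_rank_symmetric
    (s n : ℕ) (hs : 1 ≤ s) (c : Fin (2 * s) → ℕ) (hc : ∀ m, 1 ≤ c m)
    (hn : n = ∑ m, c m) (k : ℕ) (hk : k ≤ n) :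
    {I : Finset (Fin n) | IsCircFenceIdeal s n c I ∧ I.card = k}.ncard =
    {I : Finset (Fin n) | IsCircFenceIdeal s n c I ∧ I.card = n - k}.ncard := by
  have h2n : 2 ≤ n := by
    have h1 : ∑ m : Fin (2*s), 1 ≤ ∑ m, c m := Finset.sum_le_sum (fun m _ => hc m)
    have h2 : ∑ m : Fin (2*s), (1 : ℕ) = 2*s := by simp
    omega
  obtain ⟨N, rfl⟩ : ∃ N, n = N + 1 + 1 := ⟨n - 2, by omega⟩
  set n : ℕ := N + 1 + 1 with hndef
  set w : ℕ → Bool := fun p => decide (circUpStep s c p) with hw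
  -- basic `Fin n` arithmetic
  have hval1 : ((1 : Fin n) : ℕ) = 1 := by
    rw [Fin.val_one']
    exact Nat.mod_eq_of_lt (by omega)
  have hq : ∀ p : Fin n, ((p + 1 : Fin n) : ℕ) = ((p : ℕ) + 1) % n := by
    intro p
    rw [Fin.add_def, hval1]
  -- the bridge between ideals and compatible boolean sequences
  have hbridge : ∀ I : Finset (Fin n), IsCircFenceIdeal s n c I ↔
      (∀ t : Fin n, if w (t : ℕ) then
        (decide ((t+1) ∈ I)) ≤ (decide (t ∈ I)) else (decide (t ∈ I)) ≤ (decide ((t+1) ∈ I))) := by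
    intro I
    constructor
    · intro h t
      have h0 := h t (t+1) (hq t)
      by_cases hu : circUpStep s c (t : ℕ)
      · rw [if_pos hu] at h0
        have hwt : w (t : ℕ) = true := by simp [hw, hu]
        rw [if_pos hwt]
        exact (decide_le_decide _ _).mpr h0
      · rw [if_neg hu] at h0
        have hwt : ¬ (w (t : ℕ) = true) := by simp [hw, hu]
        rw [if_neg hwt]
        exact (decide_le_decide _ _).mpr h0
    · intro h p q hqe
      have hq1 : q = p + 1 := by
        apply Fin.ext
        rw [hqe, ← hq p]
      subst hq1
      have h0 := h p
      by_cases hu : circUpStep s c (p : ℕ)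
      · rw [if_pos hu]
        have hwt : w (p : ℕ) = true := by simp [hw, hu]
        rw [if_pos hwt] at h0
        exact (decide_le_decide _ _).mp h0
      · rw [if_neg hu]
        have hwt : ¬ (w (p : ℕ) = true) := by simp [hw, hu]
        rw [if_neg hwt] at h0
        exact (decide_le_decide _ _).mp h0
  -- the boolean-sequence count
  set Nk : ℕ → ℕ := fun j => (Finset.univ.filter fun b : Fin n → Bool =>
    (∀ t : Fin n, if w (t : ℕ) then b (t+1) ≤ b t else b t ≤ b (t+1)) ∧ cntB b = j).card
    with hNk
  have hcard : ∀ j : ℕ,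
      {I : Finset (Fin n) | IsCircFenceIdeal s n c I ∧ I.card = j}.ncard = Nk j := by
    intro j
    have hset : {I : Finset (Fin n) | IsCircFenceIdeal s n c I ∧ I.card = j}
        = ↑(Finset.univ.filter fun I : Finset (Fin n) =>
            IsCircFenceIdeal s n c I ∧ I.card = j) := by
      ext I; simp
    rw [hset, Set.ncard_coe_finset, hNk]
    apply Finset.card_nbij' (i := fun I => fun t => decide (t ∈ I))
      (j := fun b => Finset.univ.filter fun t => b t = true)
    · intro I hI
      simp only [Finset.mem_coe, Finset.mem_filter, Finset.mem_univ, true_and] at hI ⊢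
      refine ⟨(hbridge I).mp hI.1, ?_⟩
      rw [cntB, ← hI.2]
      congr 1
      ext t
      simp
    · intro b hb
      simp only [Finset.mem_coe, Finset.mem_filter, Finset.mem_univ, true_and] at hb ⊢
      constructor
      · apply (hbridge _).mpr
        intro t
        have h := hb.1 t
        simpa using h
      · simpa [cntB] using hb.2
    · intro I _
      ext t
      simp
    · intro b _
      funext t
      simp
  -- the generating polynomial identity
  have hG : (∑ b : Fin n → Bool,
        if (∀ t : Fin n, if w (t : ℕ) then b (t+1) ≤ b t else b t ≤ b (t+1))
          then (X : Polynomial ℚ) ^ cntB b else 0)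
      = ∑ a : Fin n → Bool,
        if (∀ t : Fin n, if w (t : ℕ) then a (t+1) ≤ a t else a t ≤ a (t+1))
          then (X : Polynomial ℚ) ^ (n - cntB a) else 0 := by
    have hG1 : (∑ b : Fin n → Bool,
          if (∀ t : Fin n, if w (t : ℕ) then b (t+1) ≤ b t else b t ≤ b (t+1))
            then (X : Polynomial ℚ) ^ cntB b else 0)
        = (((List.range n).map (fun p => Mq (w p))).prod).trace := by
      rw [cycLemma w (N+1)]
      apply Finset.sum_congr rfl
      intro b _
      exact (cycEval w (N+1) b).symm
    have hmm : (List.range n).map (fun p => Mq (w p)) = (((List.range n).map w).map Mq) := by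
      rw [List.map_map]
      rfl
    have hrevlist : (((List.range n).map w).reverse).map Mq
        = (List.range n).map (fun p => Mq (w (N + 1 - p))) := by
      rw [listRevEq, List.map_map]
      apply List.map_congr_left
      intro p _
      have : n - 1 - p = N + 1 - p := by omega
      simp only [Function.comp_apply, this]
    have hG2 : (((List.range n).map (fun p => Mq (w p))).prod).trace
        = (((List.range n).map (fun p => Mq (w (N + 1 - p)))).prod).trace := by
      rw [hmm, traceRev, hrevlist]
    have hG3 : (((List.range n).map (fun p => Mq (w (N + 1 - p)))).prod).trace
        = ∑ b : Fin n → Bool,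
            if (∀ t : Fin n, if w (N + 1 - (t : ℕ)) then b (t+1) ≤ b t else b t ≤ b (t+1))
              then (X : Polynomial ℚ) ^ cntB b else 0 := by
      rw [cycLemma (fun p => w (N + 1 - p)) (N+1)]
      apply Finset.sum_congr rfl
      intro b _
      exact cycEval (fun p => w (N + 1 - p)) (N+1) b
    rw [hG1, hG2, hG3]
    exact flipSum w (N+1)
  -- extract coefficients
  have hcoeff : (∑ b : Fin n → Bool,
        if (∀ t : Fin n, if w (t : ℕ) then b (t+1) ≤ b t else b t ≤ b (t+1))
          then (X : Polynomial ℚ) ^ cntB b else 0).coeff k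
      = (∑ a : Fin n → Bool,
        if (∀ t : Fin n, if w (t : ℕ) then a (t+1) ≤ a t else a t ≤ a (t+1))
          then (X : Polynomial ℚ) ^ (n - cntB a) else 0).coeff k := by
    rw [hG]
  rw [coeffCount (N+1)
      (P := fun b => (∀ t : Fin n, if w (t : ℕ) then b (t+1) ≤ b t else b t ≤ b (t+1)))
      (e := fun b => cntB b) k,
    coeffCount (N+1)
      (P := fun b => (∀ t : Fin n, if w (t : ℕ) then b (t+1) ≤ b t else b t ≤ b (t+1)))
      (e := fun b => n - cntB b) k] at hcoeff
  have hfilter : (Finset.univ.filter fun b : Fin n → Bool =>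
        (∀ t : Fin n, if w (t : ℕ) then b (t+1) ≤ b t else b t ≤ b (t+1)) ∧ n - cntB b = k)
      = (Finset.univ.filter fun b : Fin n → Bool =>
        (∀ t : Fin n, if w (t : ℕ) then b (t+1) ≤ b t else b t ≤ b (t+1)) ∧ cntB b = n - k) := by
    apply Finset.filter_congr
    intro b _
    have hle := cntB_le b
    constructor
    · rintro ⟨h1, h2⟩; exact ⟨h1, by omega⟩
    · rintro ⟨h1, h2⟩; exact ⟨h1, by omega⟩
  rw [hfilter] at hcoeff
  have hNN : Nk k = Nk (n - k) := by
    have := Nat.cast_injective (R := ℚ) hcoeff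
    exact this
  rw [hcard k, hcard (n - k), hNN]
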